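/- In the sedenion algebra 𝕊, with α = e₁ + e₁₀ and β = e₇ + e₁₂, the polynomial f(x) = (1/2)β x² + β has α as a root (since α² = −2), but there is no g(x) ∈ 𝕊[x] with f(x) = g(x)·(x − α). In particular, having a root λ does not imply x − λ is a right factor over 𝕊. -/

import Mathlib

/-- Cayley–Dickson double (with γ = -1) of an algebra with involution. -/
def CD (A : Type*) : Type _ := A × A

namespace CD

variable {A : Type*}

instance [AddCommGroup A] : AddCommGroup (CD A) := inferInstanceAs (AddCommGroup (A × A))
noncomputable instance [AddCommGroup A] [Module ℝ A] : Module ℝ (CD A) :=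
  inferInstanceAs (Module ℝ (A × A))

/-- Build an element of the double from its two halves. -/
def mk (a b : A) : CD A := (a, b)

section
set_option linter.unusedSectionVars false

/-- A star operation fixing `1`. -/
class StarOne (A : Type*) [One A] [Star A] : Prop where
  star_one : star (1 : A) = 1

variable [NonAssocRing A] [StarAddMonoid A] [StarOne A]

instance : One (CD A) := ⟨((1 : A), 0)⟩
instance : Mul (CD A) :=
  ⟨fun x y => (x.1 * y.1 - star y.2 * x.2, y.2 * x.1 + x.2 * star y.1)⟩
instance : Star (CD A) := ⟨fun x => (star x.1, -x.2)⟩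

lemma mul_def (x y : CD A) :
    x * y = (x.1 * y.1 - star y.2 * x.2, y.2 * x.1 + x.2 * star y.1) := rfl
lemma one_def : (1 : CD A) = ((1 : A), 0) := rfl
lemma star_def (x : CD A) : star x = (star x.1, -x.2) := rfl
lemma add_def (x y : CD A) : x + y = (x.1 + y.1, x.2 + y.2) := rfl
lemma zero_def : (0 : CD A) = ((0 : A), 0) := rfl

instance instNonAssocRing : NonAssocRing (CD A) where
  __ := (inferInstance : AddCommGroup (CD A))
  left_distrib a b c := by
    refine Prod.ext ?_ ?_
    · show a.1 * (b.1 + c.1) - star (b.2 + c.2) * a.2 =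
        (a.1 * b.1 - star b.2 * a.2) + (a.1 * c.1 - star c.2 * a.2)
      rw [mul_add, star_add, add_mul]; abel
    · show (b.2 + c.2) * a.1 + a.2 * star (b.1 + c.1) =
        (b.2 * a.1 + a.2 * star b.1) + (c.2 * a.1 + a.2 * star c.1)
      rw [add_mul, star_add, mul_add]; abel
  right_distrib a b c := by
    refine Prod.ext ?_ ?_
    · show (a.1 + b.1) * c.1 - star c.2 * (a.2 + b.2) =
        (a.1 * c.1 - star c.2 * a.2) + (b.1 * c.1 - star c.2 * b.2)
      rw [add_mul, mul_add]; abel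
    · show c.2 * (a.1 + b.1) + (a.2 + b.2) * star c.1 =
        (c.2 * a.1 + a.2 * star c.1) + (c.2 * b.1 + b.2 * star c.1)
      rw [add_mul, mul_add]; abel
  zero_mul a := by
    refine Prod.ext ?_ ?_
    · show (0 : A) * a.1 - star a.2 * 0 = 0
      simp
    · show a.2 * (0 : A) + 0 * star a.1 = 0
      simp
  mul_zero a := by
    refine Prod.ext ?_ ?_
    · show a.1 * (0 : A) - star (0 : A) * a.2 = 0
      simp
    · show (0 : A) * a.1 + a.2 * star (0 : A) = 0
      simp
  one_mul a := by
    refine Prod.ext ?_ ?_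
    · show (1 : A) * a.1 - star a.2 * 0 = a.1
      simp
    · show a.2 * (1 : A) + 0 * star a.1 = a.2
      simp
  mul_one a := by
    refine Prod.ext ?_ ?_
    · show a.1 * (1 : A) - star (0 : A) * a.2 = a.1
      simp
    · show (0 : A) * a.1 + a.2 * star (1 : A) = a.2
      simp [StarOne.star_one]

instance instStarAddMonoid : StarAddMonoid (CD A) where
  star_involutive x := by
    refine Prod.ext ?_ ?_
    · show star (star x.1) = x.1
      simp
    · show -(-x.2) = x.2
      simp
  star_add x y := by
    refine Prod.ext ?_ ?_
    · show star (x.1 + y.1) = star x.1 + star y.1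
      simp
    · show -(x.2 + y.2) = -x.2 + -y.2
      simp [add_comm]

instance instStarOne : StarOne (CD A) :=
  ⟨Prod.ext (StarOne.star_one) (show -(0 : A) = 0 from neg_zero)⟩

end

end CD

instance : CD.StarOne ℝ := ⟨by simp⟩

/-- The real octonions, as a three-fold Cayley–Dickson double of ℝ. -/
def Octonion : Type := CD (CD (CD ℝ))

instance : NonAssocRing Octonion := inferInstanceAs (NonAssocRing (CD (CD (CD ℝ))))
instance : StarAddMonoid Octonion := inferInstanceAs (StarAddMonoid (CD (CD (CD ℝ))))
instance : CD.StarOne Octonion := inferInstanceAs (CD.StarOne (CD (CD (CD ℝ))))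
noncomputable instance : Module ℝ Octonion := inferInstanceAs (Module ℝ (CD (CD (CD ℝ))))

/-- The real sedenions, as the Cayley–Dickson double of the octonions. -/
def Sedenion : Type := CD Octonion

instance : NonAssocRing Sedenion := inferInstanceAs (NonAssocRing (CD Octonion))
instance : StarAddMonoid Sedenion := inferInstanceAs (StarAddMonoid (CD Octonion))
instance : CD.StarOne Sedenion := inferInstanceAs (CD.StarOne (CD Octonion))
noncomputable instance : Module ℝ Sedenion := inferInstanceAs (Module ℝ (CD Octonion))

/-- Assemble a complex number, quaternion, octonion, sedenion from real coordinates. -/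
def mkC (f : ℕ → ℝ) (k : ℕ) : CD ℝ := CD.mk (f k) (f (k+1))
def mkH (f : ℕ → ℝ) (k : ℕ) : CD (CD ℝ) := CD.mk (mkC f k) (mkC f (k+2))
def mkO (f : ℕ → ℝ) (k : ℕ) : Octonion := CD.mk (mkH f k) (mkH f (k+4))
def mkS (f : ℕ → ℝ) : Sedenion := CD.mk (mkO f 0) (mkO f 8)

/-- The standard basis `e₀, …, e₁₅` of the sedenions. -/
def sE (n : ℕ) : Sedenion := mkS (fun k => if k = n then 1 else 0)

/-- The standard basis `e₀, …, e₇` of the octonions. -/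
def oE (n : ℕ) : Octonion := mkO (fun k => if k = n then 1 else 0) 0

/-- Powers in a (power-associative) non-associative algebra. -/
def cdpow {A : Type*} [One A] [Mul A] (x : A) : ℕ → A
  | 0 => 1
  | n+1 => cdpow x n * x

/-- The coefficients of the sedenion polynomial `f(x) = (1/2) β x² + β`. -/
noncomputable def fc3 (i : ℕ) : Sedenion :=
  if i = 0 then sE 7 + sE 12 else if i = 2 then (2 : ℝ)⁻¹ • (sE 7 + sE 12) else 0

section Aux
lemma ceq (x y : CD ℝ) : x = y ↔ x.1 = y.1 ∧ x.2 = y.2 := Prod.ext_iff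
lemma heq' (x y : CD (CD ℝ)) : x = y ↔ x.1 = y.1 ∧ x.2 = y.2 := Prod.ext_iff
lemma oeq (x y : Octonion) : x = y ↔ x.1 = y.1 ∧ x.2 = y.2 := Prod.ext_iff
lemma seq (x y : Sedenion) : x = y ↔ x.1 = y.1 ∧ x.2 = y.2 := Prod.ext_iff

lemma cmul (x y : ℝ × ℝ) : @HMul.hMul (CD ℝ) (CD ℝ) (CD ℝ) _ x y = (x.1 * y.1 - star y.2 * x.2, y.2 * x.1 + x.2 * star y.1) := rfl
lemma hmul (x y : CD ℝ × CD ℝ) : @HMul.hMul (CD (CD ℝ)) (CD (CD ℝ)) (CD (CD ℝ)) _ x y = (x.1 * y.1 - star y.2 * x.2, y.2 * x.1 + x.2 * star y.1) := rfl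
lemma omul (x y : CD (CD ℝ) × CD (CD ℝ)) : @HMul.hMul Octonion Octonion Octonion _ x y = (x.1 * y.1 - star y.2 * x.2, y.2 * x.1 + x.2 * star y.1) := rfl
lemma smul' (x y : Octonion × Octonion) : @HMul.hMul Sedenion Sedenion Sedenion _ x y = (x.1 * y.1 - star y.2 * x.2, y.2 * x.1 + x.2 * star y.1) := rfl

lemma cadd (x y : ℝ × ℝ) : @HAdd.hAdd (CD ℝ) (CD ℝ) (CD ℝ) _ x y = (x.1 + y.1, x.2 + y.2) := rfl
lemma hadd (x y : CD ℝ × CD ℝ) : @HAdd.hAdd (CD (CD ℝ)) (CD (CD ℝ)) (CD (CD ℝ)) _ x y = (x.1 + y.1, x.2 + y.2) := rfl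
lemma oadd (x y : CD (CD ℝ) × CD (CD ℝ)) : @HAdd.hAdd Octonion Octonion Octonion _ x y = (x.1 + y.1, x.2 + y.2) := rfl
lemma sadd (x y : Octonion × Octonion) : @HAdd.hAdd Sedenion Sedenion Sedenion _ x y = (x.1 + y.1, x.2 + y.2) := rfl

lemma csub (x y : ℝ × ℝ) : @HSub.hSub (CD ℝ) (CD ℝ) (CD ℝ) _ x y = (x.1 - y.1, x.2 - y.2) := rfl
lemma hsub (x y : CD ℝ × CD ℝ) : @HSub.hSub (CD (CD ℝ)) (CD (CD ℝ)) (CD (CD ℝ)) _ x y = (x.1 - y.1, x.2 - y.2) := rfl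
lemma osub (x y : CD (CD ℝ) × CD (CD ℝ)) : @HSub.hSub Octonion Octonion Octonion _ x y = (x.1 - y.1, x.2 - y.2) := rfl
lemma ssub (x y : Octonion × Octonion) : @HSub.hSub Sedenion Sedenion Sedenion _ x y = (x.1 - y.1, x.2 - y.2) := rfl

lemma cneg (x : ℝ × ℝ) : @Neg.neg (CD ℝ) _ x = (-x.1, -x.2) := rfl
lemma hneg (x : CD ℝ × CD ℝ) : @Neg.neg (CD (CD ℝ)) _ x = (-x.1, -x.2) := rfl
lemma oneg (x : CD (CD ℝ) × CD (CD ℝ)) : @Neg.neg Octonion _ x = (-x.1, -x.2) := rfl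
lemma sneg (x : Octonion × Octonion) : @Neg.neg Sedenion _ x = (-x.1, -x.2) := rfl

lemma cstar (x : ℝ × ℝ) : @Star.star (CD ℝ) _ x = (star x.1, -x.2) := rfl
lemma hstar (x : CD ℝ × CD ℝ) : @Star.star (CD (CD ℝ)) _ x = (star x.1, -x.2) := rfl
lemma ostar (x : CD (CD ℝ) × CD (CD ℝ)) : @Star.star Octonion _ x = (star x.1, -x.2) := rfl
lemma sstar (x : Octonion × Octonion) : @Star.star Sedenion _ x = (star x.1, -x.2) := rfl

lemma czero : (0 : CD ℝ) = (0, 0) := rfl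
lemma hzero : (0 : CD (CD ℝ)) = (0, 0) := rfl
lemma ozero : (0 : Octonion) = (0, 0) := rfl
lemma szero : (0 : Sedenion) = (0, 0) := rfl

lemma cone : (1 : CD ℝ) = (1, 0) := rfl
lemma hone : (1 : CD (CD ℝ)) = (1, 0) := rfl
lemma oone : (1 : Octonion) = (1, 0) := rfl
lemma sone : (1 : Sedenion) = (1, 0) := rfl

lemma ctwo : (2 : CD ℝ) = (2, 0) := by
  rw [← one_add_one_eq_two, cone, cadd]; simp [ceq, one_add_one_eq_two]; rfl
lemma htwo : (2 : CD (CD ℝ)) = (2, 0) := by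
  rw [← one_add_one_eq_two, hone, hadd]; simp [heq', one_add_one_eq_two]; rfl
lemma otwo : (2 : Octonion) = (2, 0) := by
  rw [← one_add_one_eq_two, oone, oadd]; simp [oeq, one_add_one_eq_two]; rfl
lemma stwo : (2 : Sedenion) = (2, 0) := by
  rw [← one_add_one_eq_two, sone, sadd]; simp [seq, one_add_one_eq_two]; rfl

lemma salphasq : (sE 1 + sE 10) * (sE 1 + sE 10) = -2 := by
  simp only [sE, mkS, mkO, mkH, mkC, CD.mk, stwo, sneg, oneg, hneg, cneg,
    smul', omul, hmul, cmul, sadd, oadd, hadd, cadd, sstar, ostar, hstar, cstar,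
    szero, ozero, hzero, czero, otwo, htwo, ctwo,
    seq, oeq, heq', ceq, ssub, osub, hsub, csub]
  norm_num; rfl
end Aux

lemma csmul (r : ℝ) (x : ℝ × ℝ) : @HSMul.hSMul ℝ (CD ℝ) (CD ℝ) _ r x = (r * x.1, r * x.2) := rfl
lemma hsmul (r : ℝ) (x : CD ℝ × CD ℝ) : @HSMul.hSMul ℝ (CD (CD ℝ)) (CD (CD ℝ)) _ r x = (r • x.1, r • x.2) := rfl
lemma osmul (r : ℝ) (x : CD (CD ℝ) × CD (CD ℝ)) : @HSMul.hSMul ℝ Octonion Octonion _ r x = (r • x.1, r • x.2) := rfl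
lemma ssmul (r : ℝ) (x : Octonion × Octonion) : @HSMul.hSMul ℝ Sedenion Sedenion _ r x = (r • x.1, r • x.2) := rfl

lemma sba : ((2:ℝ)⁻¹ • (sE 7 + sE 12)) * (sE 1 + sE 10) = 0 := by
  simp only [sE, mkS, mkO, mkH, mkC, CD.mk, ssmul, osmul, hsmul, csmul,
    smul', omul, hmul, cmul, sadd, oadd, hadd, cadd, sstar, ostar, hstar, cstar,
    sneg, oneg, hneg, cneg, szero, ozero, hzero, czero,
    seq, oeq, heq', ceq, ssub, osub, hsub, csub]
  norm_num; rfl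

lemma sroot : ((2:ℝ)⁻¹ • (sE 7 + sE 12)) * ((sE 1 + sE 10) * (sE 1 + sE 10)) + (sE 7 + sE 12) = 0 := by
  rw [salphasq]
  simp only [sE, mkS, mkO, mkH, mkC, CD.mk, stwo, ssmul, osmul, hsmul, csmul,
    smul', omul, hmul, cmul, sadd, oadd, hadd, cadd, sstar, ostar, hstar, cstar,
    sneg, oneg, hneg, cneg, szero, ozero, hzero, czero, otwo, htwo, ctwo,
    seq, oeq, heq', ceq, ssub, osub, hsub, csub]
  norm_num; rfl

lemma sbne : (sE 7 + sE 12 : Sedenion) ≠ 0 := by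
  simp only [sE, mkS, mkO, mkH, mkC, CD.mk, sadd, oadd, hadd, cadd,
    szero, ozero, hzero, czero, ne_eq, seq, oeq, heq', ceq]
  norm_num
  intro h
  have := congrArg (fun x : Sedenion => x.2.2.1.1) h
  norm_num at this

lemma cdpow_two (x : Sedenion) : cdpow x 2 = x * x := by
  have h2 : cdpow x 2 = cdpow x 1 * x := rfl
  have h1 : cdpow x 1 = cdpow x 0 * x := rfl
  have h0 : cdpow x 0 = 1 := rfl
  rw [h2, h1, h0, one_mul]
/-- In the sedenions, with `α = e₁ + e₁₀` and `β = e₇ + e₁₂`, the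
polynomial `f(x) = (1/2) β x² + β` has `α` as a root (indeed `α² = -2`), yet there is no
polynomial `g(x) ∈ 𝕊[x]` (given by finitely supported coefficients `g i`) with
`f(x) = g(x)·(x - α)`; the product `g(x)(x - α)` has constant coefficient `-(g 0 · α)`
and `(i+1)`-st coefficient `g i - g (i+1) · α`. -/
theorem stmt3 :
    cdpow (sE 1 + sE 10) 2 = -2 ∧
    ((2 : ℝ)⁻¹ • (sE 7 + sE 12)) * cdpow (sE 1 + sE 10) 2 + (sE 7 + sE 12) = 0 ∧
    ¬ ∃ g : ℕ → Sedenion, (∃ N, ∀ i ≥ N, g i = 0) ∧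
        fc3 0 = -(g 0 * (sE 1 + sE 10)) ∧
        (∀ i, fc3 (i + 1) = g i - g (i + 1) * (sE 1 + sE 10)) := by
  have hpow : cdpow (sE 1 + sE 10) 2 = (sE 1 + sE 10) * (sE 1 + sE 10) := cdpow_two _
  refine ⟨by rw [hpow, salphasq], by rw [hpow]; exact sroot, ?_⟩
  rintro ⟨g, ⟨N, hN⟩, h0, hs⟩
  have hz : ∀ k, ∀ i, 2 ≤ i → N ≤ i + k → g i = 0 := by
    intro k
    induction k with
    | zero => intro i _ hN'; exact hN i (by omega)
    | succ k ih =>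
      intro i h2 hNk
      by_cases hcase : N ≤ i
      · exact hN i hcase
      · have h3 : fc3 (i + 1) = 0 := by
          have h1 : i + 1 ≠ 0 := by omega
          have h2' : i + 1 ≠ 2 := by omega
          simp [fc3, h1, h2']
        have hrec : g i = g (i + 1) * (sE 1 + sE 10) := by
          have := (hs i).symm
          rw [h3] at this
          exact sub_eq_zero.mp this
        have hnext : g (i + 1) = 0 := ih (i + 1) (by omega) (by omega)
        rw [hrec, hnext, zero_mul]
  have hg2 : g 2 = 0 := hz N 2 le_rfl (by omega)
  have hg1 : g 1 = (2 : ℝ)⁻¹ • (sE 7 + sE 12) := by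
    have h := hs 1
    rw [hg2, zero_mul, sub_zero] at h
    rw [← h]; simp [fc3]
  have hg0 : g 0 = 0 := by
    have h := hs 0
    have h1 : fc3 1 = 0 := by simp [fc3]
    rw [h1] at h
    have : g 0 = g 1 * (sE 1 + sE 10) := sub_eq_zero.mp h.symm
    rw [this, hg1, sba]
  rw [hg0, zero_mul, neg_zero] at h0
  have : fc3 0 = sE 7 + sE 12 := by simp [fc3]
  exact sbne (this ▸ h0)
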